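/- Let ψ : (0,∞) → ℝ be continuous and strictly monotone, and suppose the two-point quasi-arithmetic mean generated by ψ is homogeneous: for all y₁, y₂ > 0, all w ∈ [0,1], and all k > 0, ψ⁻¹( w·ψ(k·y₁) + (1−w)·ψ(k·y₂) ) = k · ψ⁻¹( w·ψ(y₁) + (1−w)·ψ(y₂) ). Then there exist constants c ≠ 0 and d ∈ ℝ such that either ψ(y) = c·y^φ + d for all y > 0 for some φ ≠ 0, or ψ(y) = c·log y + d for all y > 0. Consequently the quasi-arithmetic mean generated by ψ is a power mean. -/

import Mathlib

open Real

lemma my_linear_of_additive (f : ℝ → ℝ) (hc : Continuous f)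
    (ha : ∀ x y, f (x + y) = f x + f y) : ∀ x, f x = f 1 * x := by
  have h0 : f 0 = 0 := by have := ha 0 0; simp at this; linarith
  let F : ℝ →+ ℝ := ⟨⟨f, h0⟩, ha⟩
  have hF : ∀ x, F x = f x := fun x => rfl
  intro x
  have := (F.toRealLinearMap hc).map_smul x 1
  simp only [AddMonoidHom.coe_toRealLinearMap, smul_eq_mul, mul_one] at this
  rw [hF] at this
  rw [this, hF, mul_comm]

lemma my_wmem {x y z : ℝ} (h : z ∈ Set.uIcc x y) (hxy : x ≠ y) :
    0 ≤ (y - z) / (y - x) ∧ (y - z) / (y - x) ≤ 1 := by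
  rcases Set.mem_uIcc.1 h with ⟨h1, h2⟩ | ⟨h1, h2⟩
  · have hlt : x < y := lt_of_le_of_ne (le_trans h1 h2) hxy
    constructor
    · exact div_nonneg (by linarith) (by linarith)
    · rw [div_le_one (by linarith)]; linarith
  · have hlt : y < x := lt_of_le_of_ne (le_trans h1 h2) (Ne.symm hxy)
    have he : (y - z) / (y - x) = (z - y) / (x - y) := by
      rw [div_eq_div_iff (by linarith) (by linarith)]; ring
    rw [he]
    constructor
    · exact div_nonneg (by linarith) (by linarith)
    · rw [div_le_one (by linarith)]; linarith

lemma my_collinear (T : ℝ → ℝ) (J : Set ℝ)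
    (h : ∀ x ∈ J, ∀ y ∈ J, ∀ w : ℝ, 0 ≤ w → w ≤ 1 →
      T (w * x + (1 - w) * y) = w * T x + (1 - w) * T y)
    {a b s : ℝ} (ha : a ∈ J) (hb : b ∈ J) (hs : s ∈ J) (hab : a ≠ b) :
    T s = T a + (s - a) / (b - a) * (T b - T a) := by
  have hba : b - a ≠ 0 := sub_ne_zero.2 (Ne.symm hab)
  have tri : s ∈ Set.uIcc a b ∨ a ∈ Set.uIcc s b ∨ b ∈ Set.uIcc s a := by
    rcases le_total s a with h1 | h1 <;> rcases le_total s b with h2 | h2 <;>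
      rcases le_total a b with h3 | h3 <;> simp [Set.mem_uIcc] <;> tauto
  rcases tri with hm | hm | hm
  · obtain ⟨hw0, hw1⟩ := my_wmem hm hab
    set w := (b - s) / (b - a) with hw
    have hcomb : w * a + (1 - w) * b = s := by
      have hwm : w * (b - a) = b - s := by rw [hw]; exact div_mul_cancel₀ _ hba
      linear_combination -hwm
    have := h a ha b hb w hw0 hw1
    rw [hcomb] at this
    rw [this, hw]; field_simp; ring
  · rcases eq_or_ne s b with rfl | hsb
    · have : a = s := by simpa using hm
      subst this; field_simp; simp
    · have hbs : b - s ≠ 0 := sub_ne_zero.2 (Ne.symm hsb)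
      obtain ⟨hw0, hw1⟩ := my_wmem hm hsb
      set w := (b - a) / (b - s) with hw
      have hcomb : w * s + (1 - w) * b = a := by
        have hwm : w * (b - s) = b - a := by rw [hw]; exact div_mul_cancel₀ _ hbs
        linear_combination -hwm
      have key := h s hs b hb w hw0 hw1
      rw [hcomb] at key
      have hwne : w ≠ 0 := by rw [hw]; exact div_ne_zero hba hbs
      -- T a = w * T s + (1-w) * T b, solve for T s
      have : T s = (T a - (1 - w) * T b) / w := by
        field_simp; linarith [key]
      rw [this, hw]
      field_simp
      ring
  · rcases eq_or_ne s a with rfl | hsa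
    · field_simp; simp
    · have has : a - s ≠ 0 := sub_ne_zero.2 (Ne.symm hsa)
      obtain ⟨hw0, hw1⟩ := my_wmem hm hsa
      set w := (a - b) / (a - s) with hw
      have hcomb : w * s + (1 - w) * a = b := by
        have hwm : w * (a - s) = a - b := by rw [hw]; exact div_mul_cancel₀ _ has
        linear_combination -hwm
      have key := h s hs a ha w hw0 hw1
      rw [hcomb] at key
      have hwne : w ≠ 0 := by rw [hw]; exact div_ne_zero (sub_ne_zero.2 hab) has
      have : T s = (T b - (1 - w) * T a) / w := by
        field_simp; linarith [key]
      rw [this, hw]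
      field_simp [sub_ne_zero.2 hab]
      ring

/-- homogeneous quasi-arithmetic means are power means.
Let `ψ : (0,∞) → ℝ` be continuous and strictly monotone (increasing or decreasing), with a
left inverse `ψinv` on `(0,∞)`. If the two-point quasi-arithmetic mean generated by `ψ` is
homogeneous, i.e. for all `y₁, y₂ > 0`, `w ∈ [0,1]`, `k > 0`,
`ψ⁻¹(w ψ(k y₁) + (1−w) ψ(k y₂)) = k ψ⁻¹(w ψ(y₁) + (1−w) ψ(y₂))`,
then there are `c ≠ 0` and `d` with either `ψ y = c y^φ + d` on `(0,∞)` for some `φ ≠ 0`,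
or `ψ y = c log y + d` on `(0,∞)`. -/
theorem stmt8 (ψ ψinv : ℝ → ℝ)
    (hcont : ContinuousOn ψ (Set.Ioi 0))
    (hmono : StrictMonoOn ψ (Set.Ioi 0) ∨ StrictAntiOn ψ (Set.Ioi 0))
    (hinv : ∀ y : ℝ, 0 < y → ψinv (ψ y) = y)
    (hhom : ∀ y₁ : ℝ, 0 < y₁ → ∀ y₂ : ℝ, 0 < y₂ →
      ∀ w : ℝ, w ∈ Set.Icc (0:ℝ) 1 → ∀ k : ℝ, 0 < k →
      ψinv (w * ψ (k * y₁) + (1 - w) * ψ (k * y₂))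
        = k * ψinv (w * ψ y₁ + (1 - w) * ψ y₂)) :
    ∃ c : ℝ, c ≠ 0 ∧ ∃ d : ℝ,
      (∃ φ : ℝ, φ ≠ 0 ∧ ∀ y : ℝ, 0 < y → ψ y = c * y ^ φ + d)
      ∨ (∀ y : ℝ, 0 < y → ψ y = c * Real.log y + d) := by
  have hψ12 : ψ 1 ≠ ψ 2 := by
    rcases hmono with hm | hm
    · exact ne_of_lt (hm (by norm_num) (by norm_num) (by norm_num))
    · exact ne_of_gt (hm (by norm_num) (by norm_num) (by norm_num))
  have hne : ψ 2 - ψ 1 ≠ 0 := sub_ne_zero.2 (Ne.symm hψ12)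
  set J : Set ℝ := ψ '' Set.Ioi 0 with hJ
  have key : ∀ k : ℝ, 0 < k → ∀ y₁ : ℝ, 0 < y₁ → ∀ y₂ : ℝ, 0 < y₂ →
      ∀ w : ℝ, 0 ≤ w → w ≤ 1 →
      ∃ u : ℝ, 0 < u ∧ ψ u = w * ψ y₁ + (1 - w) * ψ y₂ ∧
        w * ψ (k * y₁) + (1 - w) * ψ (k * y₂) = ψ (k * u) := by
    intro k hk y₁ hy₁ y₂ hy₂ w hw0 hw1
    have ivt : ∀ z₁ : ℝ, 0 < z₁ → ∀ z₂ : ℝ, 0 < z₂ →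
        ∃ u : ℝ, 0 < u ∧ ψ u = w * ψ z₁ + (1 - w) * ψ z₂ := by
      intro z₁ hz₁ z₂ hz₂
      have hsub : Set.uIcc z₁ z₂ ⊆ Set.Ioi 0 := by
        intro x hx
        rcases Set.mem_uIcc.1 hx with ⟨h1, _⟩ | ⟨h1, _⟩
        · exact lt_of_lt_of_le hz₁ h1
        · exact lt_of_lt_of_le hz₂ h1
      have hmem : w * ψ z₁ + (1 - w) * ψ z₂ ∈ Set.uIcc (ψ z₁) (ψ z₂) := by
        rw [← segment_eq_uIcc]
        exact ⟨w, 1 - w, hw0, by linarith, by ring, by simp [smul_eq_mul]⟩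
      obtain ⟨u, hu, hψu⟩ := intermediate_value_uIcc (hcont.mono hsub) hmem
      exact ⟨u, hsub hu, hψu⟩
    obtain ⟨u, hu, hψu⟩ := ivt y₁ hy₁ y₂ hy₂
    obtain ⟨u', hu', hψu'⟩ := ivt (k * y₁) (mul_pos hk hy₁) (k * y₂) (mul_pos hk hy₂)
    have h1 : ψinv (w * ψ y₁ + (1 - w) * ψ y₂) = u := by rw [← hψu, hinv u hu]
    have h2 : ψinv (w * ψ (k * y₁) + (1 - w) * ψ (k * y₂)) = u' := by
      rw [← hψu', hinv u' hu']
    have hh := hhom y₁ hy₁ y₂ hy₂ w ⟨hw0, hw1⟩ k hk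
    rw [h1, h2] at hh
    exact ⟨u, hu, hψu, by rw [← hψu', hh]⟩
  set A : ℝ → ℝ := fun k => (ψ (k * 2) - ψ (k * 1)) / (ψ 2 - ψ 1) with hA
  set B : ℝ → ℝ := fun k => ψ (k * 1) - A k * ψ 1 with hB
  have hfe : ∀ k : ℝ, 0 < k → ∀ y : ℝ, 0 < y → ψ (k * y) = A k * ψ y + B k := by
    intro k hk y hy
    set T : ℝ → ℝ := fun s => ψ (k * ψinv s) with hT
    have hTc : ∀ x ∈ J, ∀ z ∈ J, ∀ w : ℝ, 0 ≤ w → w ≤ 1 →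
        T (w * x + (1 - w) * z) = w * T x + (1 - w) * T z := by
      intro x hx z hz w hw0 hw1
      obtain ⟨y₁, hy₁, rfl⟩ := hx
      obtain ⟨y₂, hy₂, rfl⟩ := hz
      obtain ⟨u, hu, hψu, hkey⟩ := key k hk y₁ hy₁ y₂ hy₂ w hw0 hw1
      simp only [hT]
      rw [hinv y₁ hy₁, hinv y₂ hy₂, ← hψu, hinv u hu]
      exact hkey.symm
    have hc := my_collinear T J hTc (a := ψ 1) (b := ψ 2) (s := ψ y)
      ⟨1, by norm_num, rfl⟩ ⟨2, by norm_num, rfl⟩ ⟨y, hy, rfl⟩ hψ12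
    simp only [hT] at hc
    rw [hinv y hy, hinv 1 one_pos, hinv 2 two_pos] at hc
    rw [hc]
    simp only [hA, hB]
    field_simp
    ring
  have hApos : ∀ k : ℝ, 0 < k → 0 < A k := by
    intro k hk
    have hk1 : (0:ℝ) < k * 1 := by linarith
    have hk2 : (0:ℝ) < k * 2 := by linarith
    have hlt : k * 1 < k * 2 := by linarith
    simp only [hA]
    rcases hmono with hm | hm
    · exact div_pos (sub_pos.2 (hm hk1 hk2 hlt))
        (sub_pos.2 (hm (by norm_num) (by norm_num) (by norm_num)))
    · exact div_pos_of_neg_of_neg (sub_neg.2 (hm hk1 hk2 hlt))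
        (sub_neg.2 (hm (by norm_num) (by norm_num) (by norm_num)))
  have hmul : ∀ k : ℝ, 0 < k → ∀ l : ℝ, 0 < l →
      A (k * l) = A k * A l ∧ B (k * l) = A k * B l + B k := by
    intro k hk l hl
    have hkl := mul_pos hk hl
    have e1 : ψ (k * l * 1) = A (k * l) * ψ 1 + B (k * l) := hfe (k * l) hkl 1 one_pos
    have e2 : ψ (k * l * 2) = A (k * l) * ψ 2 + B (k * l) := hfe (k * l) hkl 2 two_pos
    have e3 : ψ (k * (l * 1)) = A k * ψ (l * 1) + B k := hfe k hk (l * 1) (by positivity)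
    have e4 : ψ (k * (l * 2)) = A k * ψ (l * 2) + B k := hfe k hk (l * 2) (by positivity)
    have e5 : ψ (l * 1) = A l * ψ 1 + B l := hfe l hl 1 one_pos
    have e6 : ψ (l * 2) = A l * ψ 2 + B l := hfe l hl 2 two_pos
    rw [← mul_assoc] at e3 e4
    rw [e5] at e3; rw [e6] at e4
    have h7 : A (k * l) * ψ 1 + B (k * l) = A k * (A l * ψ 1 + B l) + B k := by
      rw [← e1, e3]
    have h8 : A (k * l) * ψ 2 + B (k * l) = A k * (A l * ψ 2 + B l) + B k := by
      rw [← e2, e4]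
    have h9 : A (k * l) * (ψ 2 - ψ 1) = A k * A l * (ψ 2 - ψ 1) := by
      linear_combination h8 - h7
    have hA' : A (k * l) = A k * A l := mul_right_cancel₀ hne h9
    refine ⟨hA', ?_⟩
    rw [hA'] at h7
    linear_combination h7
  have hψc : ∀ c : ℝ, 0 < c → Continuous fun t : ℝ => ψ (Real.exp t * c) := by
    intro c hc
    apply hcont.comp_continuous (continuous_exp.mul continuous_const)
    intro t
    exact Set.mem_Ioi.2 (mul_pos (exp_pos t) hc)
  have hAc : Continuous fun t : ℝ => A (Real.exp t) := by
    simp only [hA]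
    exact ((hψc 2 two_pos).sub (hψc 1 one_pos)).div_const _
  have hBc : Continuous fun t : ℝ => B (Real.exp t) := by
    simp only [hB, hA]
    exact (hψc 1 one_pos).sub
      ((((hψc 2 two_pos).sub (hψc 1 one_pos)).div_const _).mul continuous_const)
  have hac : Continuous fun t : ℝ => Real.log (A (Real.exp t)) :=
    hAc.log fun t => (hApos _ (exp_pos t)).ne'
  have haadd : ∀ s t : ℝ,
      Real.log (A (Real.exp (s + t))) = Real.log (A (Real.exp s)) + Real.log (A (Real.exp t)) := by
    intro s t
    rw [Real.exp_add, (hmul _ (exp_pos s) _ (exp_pos t)).1,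
      Real.log_mul (hApos _ (exp_pos s)).ne' (hApos _ (exp_pos t)).ne']
  have hlin := my_linear_of_additive _ hac haadd
  set φ : ℝ := Real.log (A (Real.exp 1)) with hφdef
  have hAval : ∀ k : ℝ, 0 < k → A k = k ^ φ := by
    intro k hk
    have h1 : Real.log (A (Real.exp (Real.log k))) = φ * Real.log k := hlin _
    rw [Real.exp_log hk] at h1
    rw [Real.rpow_def_of_pos hk, ← Real.exp_log (hApos k hk), h1, mul_comm]
  rcases eq_or_ne φ 0 with hφ | hφ
  · -- log case
    have hA1 : ∀ k : ℝ, 0 < k → A k = 1 := fun k hk => by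
      rw [hAval k hk, hφ, Real.rpow_zero]
    have hBadd : ∀ s t : ℝ,
        B (Real.exp (s + t)) = B (Real.exp s) + B (Real.exp t) := by
      intro s t
      rw [Real.exp_add]
      have h := (hmul _ (exp_pos s) _ (exp_pos t)).2
      rw [hA1 _ (exp_pos s)] at h
      linarith
    have hblin := my_linear_of_additive _ hBc hBadd
    set c : ℝ := B (Real.exp 1) with hcdef
    have hBval : ∀ k : ℝ, 0 < k → B k = c * Real.log k := by
      intro k hk
      have h := hblin (Real.log k)
      rwa [Real.exp_log hk] at h
    have hψval : ∀ y : ℝ, 0 < y → ψ y = c * Real.log y + ψ 1 := by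
      intro y hy
      have h := hfe y hy 1 one_pos
      rw [mul_one, hA1 y hy, one_mul, hBval y hy] at h
      linarith
    have hc0 : c ≠ 0 := by
      intro hc
      have h2 := hψval 2 two_pos
      rw [hc] at h2
      simp at h2
      exact hψ12 h2.symm
    exact ⟨c, hc0, ψ 1, Or.inr hψval⟩
  · -- power case
    have h2φ : (2:ℝ) ^ φ ≠ 1 := by
      rw [Real.rpow_def_of_pos two_pos]
      intro h
      rcases mul_eq_zero.1 ((Real.exp_eq_one_iff _).1 h) with h' | h'
      · exact (Real.log_pos one_lt_two).ne' h'
      · exact hφ h'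
    have hone : 1 - A 2 ≠ 0 := by
      rw [hAval 2 two_pos]
      intro h
      exact h2φ (by linarith)
    set d : ℝ := B 2 / (1 - A 2) with hd
    have hBval : ∀ k : ℝ, 0 < k → B k = d * (1 - A k) := by
      intro k hk
      have e1 : ψ (k * 2) = A k * ψ 2 + B k := hfe k hk 2 two_pos
      have e2 : ψ (2 * k) = A 2 * ψ k + B 2 := hfe 2 two_pos k hk
      have e3 : ψ k = A k * ψ 1 + B k := by
        have h := hfe k hk 1 one_pos; rwa [mul_one] at h
      have e4 : ψ 2 = A 2 * ψ 1 + B 2 := by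
        have h := hfe 2 two_pos 1 one_pos; rwa [mul_one] at h
      rw [mul_comm k 2] at e1
      have h5 : B k * (1 - A 2) = B 2 * (1 - A k) := by
        linear_combination e2 - e1 + A 2 * e3 - A k * e4
      rw [hd, div_mul_eq_mul_div, eq_div_iff hone]
      linear_combination h5
    set c : ℝ := ψ 1 - d with hcdef
    have hψval : ∀ y : ℝ, 0 < y → ψ y = c * y ^ φ + d := by
      intro y hy
      have e3 : ψ y = A y * ψ 1 + B y := by
        have h := hfe y hy 1 one_pos; rwa [mul_one] at h
      rw [hBval y hy, hAval y hy] at e3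
      rw [e3, hcdef]
      ring
    have hc0 : c ≠ 0 := by
      intro hc
      have h1 := hψval 1 one_pos
      have h2 := hψval 2 two_pos
      rw [hc, Real.one_rpow] at h1
      rw [hc] at h2
      simp at h1 h2
      exact hψ12 (h1.trans h2.symm)
    exact ⟨c, hc0, d, Or.inl ⟨φ, hφ, hψval⟩⟩
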